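/- Let H₁ ∈ ℝ^{d₁×d₁} and H₂ ∈ ℝ^{d₂×d₂} be symmetric matrices, and suppose the average traces satisfy (1/d₁)Tr(H₁) ≤ (1/d₂)Tr(H₂). If Δ₁ and Δ₂ are random vectors with E[Δ₁ Δ₁ᵀ] = (σ²/d₁) I and E[Δ₂ Δ₂ᵀ] = (σ²/d₂) I for the same σ ≥ 0, then E[½ Δ₁ᵀ H₁ Δ₁] ≤ E[½ Δ₂ᵀ H₂ Δ₂]. -/

import Mathlib

open MeasureTheory

lemma dhf_aux {Ω : Type*} [MeasurableSpace Ω] {μ : Measure Ω}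
    [IsProbabilityMeasure μ] {d : ℕ} (H : Matrix (Fin d) (Fin d) ℝ)
    (Δ : Ω → Fin d → ℝ) (σ : ℝ)
    (hint : ∀ i j, Integrable (fun ω => Δ ω i * Δ ω j) μ)
    (hmom : (Matrix.of fun i j => ∫ ω, Δ ω i * Δ ω j ∂μ)
      = (σ ^ 2 / (d : ℝ)) • (1 : Matrix (Fin d) (Fin d) ℝ)) :
    ∫ ω, (1 / 2 : ℝ) * dotProduct (Δ ω) (H.mulVec (Δ ω)) ∂μ
      = (1 / 2) * (σ ^ 2 / (d : ℝ)) * H.trace := by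
  have key : ∀ ω, (1 / 2 : ℝ) * dotProduct (Δ ω) (H.mulVec (Δ ω))
      = ∑ i, ∑ j, (1 / 2 : ℝ) * H i j * (Δ ω i * Δ ω j) := by
    intro ω
    simp only [dotProduct, Matrix.mulVec, Finset.mul_sum]
    congr 1; ext i; congr 1; ext j; ring
  simp only [key]
  rw [integral_finset_sum _ (fun i _ => integrable_finset_sum _
    (fun j _ => ((hint i j).const_mul _)))]
  have : ∀ i, ∫ ω, ∑ j, (1 / 2 : ℝ) * H i j * (Δ ω i * Δ ω j) ∂μ
      = ∑ j, (1 / 2 : ℝ) * H i j * ∫ ω, Δ ω i * Δ ω j ∂μ := by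
    intro i
    rw [integral_finset_sum _ (fun j _ => (hint i j).const_mul _)]
    exact Finset.sum_congr rfl fun j _ => integral_const_mul _ _
  simp only [this]
  have hm : ∀ i j, ∫ ω, Δ ω i * Δ ω j ∂μ
      = (σ ^ 2 / (d : ℝ)) * (if i = j then (1 : ℝ) else 0) := by
    intro i j
    have := congrFun (congrFun hmom i) j
    simpa [Matrix.one_apply, Matrix.smul_apply] using this
  simp only [hm, Matrix.trace, Matrix.diag, mul_ite, mul_one, mul_zero,
    Finset.sum_ite_eq, Finset.mem_univ, if_true, Finset.mul_sum]
  exact Finset.sum_congr rfl fun i _ => by ring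

/-- Layers with smaller average Hessian trace are less sensitive to isotropic
random perturbations of the same expected magnitude (HAWQ-V2 Lemma). -/
theorem dhf_stmt1 {Ω₁ Ω₂ : Type*} [MeasurableSpace Ω₁] [MeasurableSpace Ω₂]
    {μ₁ : Measure Ω₁} {μ₂ : Measure Ω₂}
    [IsProbabilityMeasure μ₁] [IsProbabilityMeasure μ₂]
    {d₁ d₂ : ℕ} (hd₁ : 0 < d₁) (hd₂ : 0 < d₂)
    (H₁ : Matrix (Fin d₁) (Fin d₁) ℝ) (H₂ : Matrix (Fin d₂) (Fin d₂) ℝ)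
    (hH₁ : H₁.IsHermitian) (hH₂ : H₂.IsHermitian)
    (htr : (1 / (d₁ : ℝ)) * H₁.trace ≤ (1 / (d₂ : ℝ)) * H₂.trace)
    (Δ₁ : Ω₁ → Fin d₁ → ℝ) (Δ₂ : Ω₂ → Fin d₂ → ℝ) (σ : ℝ) (hσ : 0 ≤ σ)
    (hint₁ : ∀ i j, Integrable (fun ω => Δ₁ ω i * Δ₁ ω j) μ₁)
    (hint₂ : ∀ i j, Integrable (fun ω => Δ₂ ω i * Δ₂ ω j) μ₂)
    (hmom₁ : (Matrix.of fun i j => ∫ ω, Δ₁ ω i * Δ₁ ω j ∂μ₁)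
      = (σ ^ 2 / (d₁ : ℝ)) • (1 : Matrix (Fin d₁) (Fin d₁) ℝ))
    (hmom₂ : (Matrix.of fun i j => ∫ ω, Δ₂ ω i * Δ₂ ω j ∂μ₂)
      = (σ ^ 2 / (d₂ : ℝ)) • (1 : Matrix (Fin d₂) (Fin d₂) ℝ)) :
    ∫ ω, (1 / 2 : ℝ) * dotProduct (Δ₁ ω) (H₁.mulVec (Δ₁ ω)) ∂μ₁
      ≤ ∫ ω, (1 / 2 : ℝ) * dotProduct (Δ₂ ω) (H₂.mulVec (Δ₂ ω)) ∂μ₂ := by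
  rw [dhf_aux H₁ Δ₁ σ hint₁ hmom₁, dhf_aux H₂ Δ₂ σ hint₂ hmom₂]
  have hσ2 : (0 : ℝ) ≤ σ ^ 2 / 2 := by positivity
  calc (1 / 2) * (σ ^ 2 / (d₁ : ℝ)) * H₁.trace
      = (σ ^ 2 / 2) * ((1 / (d₁ : ℝ)) * H₁.trace) := by ring
    _ ≤ (σ ^ 2 / 2) * ((1 / (d₂ : ℝ)) * H₂.trace) := by
        exact mul_le_mul_of_nonneg_left htr hσ2
    _ = (1 / 2) * (σ ^ 2 / (d₂ : ℝ)) * H₂.trace := by ring
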